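/- Let A be a real n×n matrix, R and Q real n×n matrices, and P₀ a real n×n matrix. Let (X₁(t), X₂(t)) be the solution of the linear time-invariant system Ẋ₁ = −AᵀX₁ + RX₂, Ẋ₂ = QX₁ + AX₂ with initial conditions X₁(0) = I_n, X₂(0) = P₀. If X₁(t) is invertible for all t in an interval [0, T), then P(t) := X₂(t) X₁(t)⁻¹ solves the matrix Riccati differential equation Ṗ = AP + PAᵀ − PRP + Q with P(0) = P₀ on [0, T). -/

import Mathlib

open scoped Matrix.Norms.L2Operator
open scoped Matrix

/-- **Riccati solutions from linear systems.** If `(X₁, X₂)` solves the LTI system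
`Ẋ₁ = -AᵀX₁ + RX₂`, `Ẋ₂ = QX₁ + AX₂` with `X₁(0) = I`, `X₂(0) = P₀`, and `X₁(t)` is
invertible for all `t ∈ [0, T)`, then `P(t) = X₂(t) X₁(t)⁻¹` solves the matrix Riccati
equation `Ṗ = AP + PAᵀ - PRP + Q` with `P(0) = P₀` on `[0, T)`. -/
theorem riccati_solution_from_linear_system
    (n : ℕ) (A R Q P₀ : Matrix (Fin n) (Fin n) ℝ) (T : ℝ)
    (X₁ X₂ : ℝ → Matrix (Fin n) (Fin n) ℝ)
    (hX₁0 : X₁ 0 = 1) (hX₂0 : X₂ 0 = P₀)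
    (hX₁ : ∀ t ∈ Set.Ico (0 : ℝ) T,
      HasDerivWithinAt X₁ (-Aᵀ * X₁ t + R * X₂ t) (Set.Ico 0 T) t)
    (hX₂ : ∀ t ∈ Set.Ico (0 : ℝ) T,
      HasDerivWithinAt X₂ (Q * X₁ t + A * X₂ t) (Set.Ico 0 T) t)
    (hinv : ∀ t ∈ Set.Ico (0 : ℝ) T, IsUnit (X₁ t)) :
    X₂ 0 * (X₁ 0)⁻¹ = P₀ ∧
    ∀ t ∈ Set.Ico (0 : ℝ) T,
      HasDerivWithinAt (fun s => X₂ s * (X₁ s)⁻¹)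
        (A * (X₂ t * (X₁ t)⁻¹) + (X₂ t * (X₁ t)⁻¹) * Aᵀ
          - (X₂ t * (X₁ t)⁻¹) * R * (X₂ t * (X₁ t)⁻¹) + Q) (Set.Ico 0 T) t := by
  constructor
  · simp [hX₁0, hX₂0]
  · intro t ht
    have hu : IsUnit (X₁ t) := hinv t ht
    have hud : IsUnit (X₁ t).det := (Matrix.isUnit_iff_isUnit_det _).mp hu
    have hinvderiv : HasDerivWithinAt (fun s => (X₁ s)⁻¹)
        (-((X₁ t)⁻¹ * (-Aᵀ * X₁ t + R * X₂ t) * (X₁ t)⁻¹)) (Set.Ico 0 T) t := by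
      have h1 : HasFDerivAt Ring.inverse
          (-(ContinuousLinearMap.mulLeftRight ℝ _ ↑hu.unit⁻¹ ↑hu.unit⁻¹))
          (X₁ t) := hasFDerivAt_ringInverse hu.unit
      have h2 := h1.comp_hasDerivWithinAt t (hX₁ t ht)
      have h3 : (fun s => (X₁ s)⁻¹) = fun s => Ring.inverse (X₁ s) := by
        funext s; exact Matrix.nonsing_inv_eq_ringInverse _
      rw [h3]
      convert h2 using 1
      case e'_4 => rfl
      case e'_5 => rfl
      case e'_6 => rfl
      case e'_8 => rfl
      have hcoe : (↑hu.unit⁻¹ : Matrix (Fin n) (Fin n) ℝ) = (X₁ t)⁻¹ := by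
        rw [Matrix.coe_units_inv, hu.unit_spec]
      simp [hcoe]
    have hprod := (hX₂ t ht).mul hinvderiv
    convert hprod using 1
    case e'_4 => rfl
    case e'_5 => rfl
    case e'_6 => rfl
    case e'_8 => rfl
    have e1 : X₁ t * (X₁ t)⁻¹ = 1 := Matrix.mul_nonsing_inv _ hud
    have e2 : (X₁ t)⁻¹ * X₁ t = 1 := Matrix.nonsing_inv_mul _ hud
    have : (Q * X₁ t + A * X₂ t) * (X₁ t)⁻¹
        + X₂ t * -((X₁ t)⁻¹ * (-Aᵀ * X₁ t + R * X₂ t) * (X₁ t)⁻¹)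
        = Q * (X₁ t * (X₁ t)⁻¹) + A * (X₂ t * (X₁ t)⁻¹)
        + X₂ t * (X₁ t)⁻¹ * Aᵀ * (X₁ t * (X₁ t)⁻¹)
        - X₂ t * (X₁ t)⁻¹ * R * (X₂ t * (X₁ t)⁻¹) := by
      noncomm_ring
    rw [this, e1, mul_one, mul_one]
    noncomm_ring
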